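/- arXiv:1404.2698 — 5 statements merged into one kernel-verified Lean document; each statement's English description precedes it below -/
import Mathlib

section
/- For every two-qubit unitary U, the KC number of its adjoint equals its own KC number: #KC(U†) = #KC(U). -/
open Matrix Kronecker Complex

noncomputable section

/-- 2×2 complex matrices (one qubit operators). -/
abbrev M2 := Matrix (Fin 2) (Fin 2) ℂ
/-- 4×4 complex matrices indexed by `(Fin 2) × (Fin 2)` (two-qubit operators). -/
abbrev M4 := Matrix (Fin 2 × Fin 2) (Fin 2 × Fin 2) ℂ

/-- Pauli X. -/
def PX : M2 := !![0, 1; 1, 0]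
/-- Pauli Y. -/
def PY : M2 := !![0, -Complex.I; Complex.I, 0]
/-- Pauli Z. -/
def PZ : M2 := !![1, 0; 0, -1]

def IsUnitary2 (a : M2) : Prop := a ∈ Matrix.unitaryGroup (Fin 2) ℂ
def IsUnitary4 (U : M4) : Prop := U ∈ Matrix.unitaryGroup (Fin 2 × Fin 2) ℂ

/-- The global part `exp(i(αx X⊗X + αy Y⊗Y + αz Z⊗Z))` of a Kraus–Cirac decomposition. -/
def KCcore (ax ay az : ℝ) : M4 :=
  NormedSpace.exp (Complex.I •
    ((ax : ℂ) • (PX ⊗ₖ PX) + (ay : ℂ) • (PY ⊗ₖ PY) + (az : ℂ) • (PZ ⊗ₖ PZ)))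

/-- The number of nonzero coefficients among `(αx, αy, αz)`. -/
def nnz (ax ay az : ℝ) : ℕ :=
  (if ax = 0 then 0 else 1) + (if ay = 0 then 0 else 1) + (if az = 0 then 0 else 1)

/-- The Kraus–Cirac number `#KC(U)`: the minimum number of nonzero KC coefficients over
all Kraus–Cirac decompositions of `U`. -/
def KCnum (U : M4) : ℕ :=
  sInf { n | ∃ uA uB vA vB : M2, ∃ ax ay az : ℝ,
    IsUnitary2 uA ∧ IsUnitary2 uB ∧ IsUnitary2 vA ∧ IsUnitary2 vB ∧
    U = (uA ⊗ₖ uB) * KCcore ax ay az * (vA ⊗ₖ vB) ∧ n = nnz ax ay az }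

def E00 : M2 := !![1, 0; 0, 0]
def E11 : M2 := !![0, 0; 0, 1]

/-- Controlled-unitaries up to local unitaries. -/
def Uc : Set M4 := { U | ∃ a b c d w : M2,
  IsUnitary2 a ∧ IsUnitary2 b ∧ IsUnitary2 c ∧ IsUnitary2 d ∧ IsUnitary2 w ∧
  U = (a ⊗ₖ b) * (E00 ⊗ₖ (1 : M2) + E11 ⊗ₖ w) * (c ⊗ₖ d) }

/-- Partial trace over the second qubit. -/
def ptraceB (M : M4) : M2 := Matrix.of fun i j => ∑ k : Fin 2, M (i, k) (j, k)

/-- The controlled-phase gate `diag(1,1,1,e^{iθ})`. -/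
def Cp (θ : ℝ) : M4 :=
  Matrix.diagonal fun p => if p = ((1 : Fin 2), (1 : Fin 2)) then Complex.exp (Complex.I * θ) else 1

lemma kron_conjTranspose {l m n p : Type*} (A : Matrix l m ℂ) (B : Matrix n p ℂ) :
    (A ⊗ₖ B)ᴴ = Aᴴ ⊗ₖ Bᴴ := by
  ext ⟨i, j⟩ ⟨k, l⟩
  simp [conjTranspose_apply, mul_comm]

lemma KCcore_conjTranspose (ax ay az : ℝ) :
    (KCcore ax ay az)ᴴ = KCcore (-ax) (-ay) (-az) := by
  have hX : (PX ⊗ₖ PX)ᴴ = PX ⊗ₖ PX := by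
    rw [kron_conjTranspose]
    congr 1 <;> · ext i j; fin_cases i <;> fin_cases j <;> simp [PX]
  have hY : (PY ⊗ₖ PY)ᴴ = PY ⊗ₖ PY := by
    rw [kron_conjTranspose]
    congr 1 <;> · ext i j; fin_cases i <;> fin_cases j <;> simp [PY]
  have hZ : (PZ ⊗ₖ PZ)ᴴ = PZ ⊗ₖ PZ := by
    rw [kron_conjTranspose]
    congr 1 <;> · ext i j; fin_cases i <;> fin_cases j <;> simp [PZ]
  rw [KCcore, KCcore, ← Matrix.exp_conjTranspose]
  congr 1
  rw [conjTranspose_smul, conjTranspose_add, conjTranspose_add,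
    conjTranspose_smul, conjTranspose_smul, conjTranspose_smul, hX, hY, hZ]
  push_cast
  simp only [neg_smul, smul_neg, star_def, Complex.conj_I, Complex.conj_ofReal]
  module

lemma KCset_mem_adj (U : M4) {n : ℕ}
    (h : n ∈ { n | ∃ uA uB vA vB : M2, ∃ ax ay az : ℝ,
      IsUnitary2 uA ∧ IsUnitary2 uB ∧ IsUnitary2 vA ∧ IsUnitary2 vB ∧
      U = (uA ⊗ₖ uB) * KCcore ax ay az * (vA ⊗ₖ vB) ∧ n = nnz ax ay az }) :
    n ∈ { n | ∃ uA uB vA vB : M2, ∃ ax ay az : ℝ,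
      IsUnitary2 uA ∧ IsUnitary2 uB ∧ IsUnitary2 vA ∧ IsUnitary2 vB ∧
      Uᴴ = (uA ⊗ₖ uB) * KCcore ax ay az * (vA ⊗ₖ vB) ∧ n = nnz ax ay az } := by
  obtain ⟨uA, uB, vA, vB, ax, ay, az, h1, h2, h3, h4, hEq, hn⟩ := h
  refine ⟨vAᴴ, vBᴴ, uAᴴ, uBᴴ, -ax, -ay, -az,
    Unitary.star_mem h3, Unitary.star_mem h4, Unitary.star_mem h1, Unitary.star_mem h2, ?_, ?_⟩
  · rw [hEq, conjTranspose_mul, conjTranspose_mul, kron_conjTranspose, kron_conjTranspose,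
      KCcore_conjTranspose, mul_assoc]
  · simp [nnz, hn]

/-- the KC number of the adjoint equals the KC number. -/
theorem stmt2 (U : M4) (hU : IsUnitary4 U) : KCnum Uᴴ = KCnum U := by
  unfold KCnum
  congr 1
  ext n
  constructor
  · intro h
    have := KCset_mem_adj Uᴴ h
    rwa [conjTranspose_conjTranspose] at this
  · exact KCset_mem_adj U

end
end

section
/- Every two-qubit unitary is a product of three controlled-unitaries up to local unitaries: for every unitary W ∈ M₄(ℂ) there exist U, V, X ∈ U_c with W = U·V·X. -/
open Matrix Kronecker Complex

set_option maxHeartbeats 1000000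

noncomputable section

lemma unit2_iff {a : M2} : IsUnitary2 a ↔ aᴴ * a = 1 := by
  unfold IsUnitary2
  rw [Matrix.mem_unitaryGroup_iff', Matrix.star_eq_conjTranspose]

lemma unit2_iff' {a : M2} : IsUnitary2 a ↔ a * aᴴ = 1 := by
  unfold IsUnitary2
  rw [Matrix.mem_unitaryGroup_iff, Matrix.star_eq_conjTranspose]

lemma unit2_mul {a b : M2} (ha : IsUnitary2 a) (hb : IsUnitary2 b) : IsUnitary2 (a * b) :=
  mul_mem ha hb

lemma unit2_star {a : M2} (ha : IsUnitary2 a) : IsUnitary2 aᴴ := by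
  have : IsUnitary2 (star a) := Unitary.star_mem ha
  simpa [Matrix.star_eq_conjTranspose] using this

lemma unit2_one : IsUnitary2 1 := by rw [unit2_iff]; simp

/-- blocks of a two-qubit operator over the first index -/
def blk (M : M4) (i j : Fin 2) : M2 := Matrix.of fun k l => M (i, k) (j, l)

lemma M4_ext {M N : M4} (h : ∀ i j, blk M i j = blk N i j) : M = N := by
  ext ⟨i, k⟩ ⟨j, l⟩
  exact congrFun (congrFun (h i j) k) l

lemma blk_mul (M N : M4) (i j : Fin 2) :
    blk (M * N) i j = blk M i 0 * blk N 0 j + blk M i 1 * blk N 1 j := by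
  ext k l
  simp [blk, Matrix.mul_apply, Fintype.sum_prod_type, Fin.sum_univ_two]


lemma blk_conjT (M : M4) (i j : Fin 2) : blk Mᴴ i j = (blk M j i)ᴴ := by
  ext k l; simp [blk, Matrix.conjTranspose_apply]

lemma blk_kron (X Y : M2) (i j : Fin 2) : blk (X ⊗ₖ Y) i j = X i j • Y := by
  ext k l; simp [blk, Matrix.kroneckerMap_apply, Matrix.smul_apply, smul_eq_mul]

lemma blk_add (M N : M4) (i j : Fin 2) : blk (M + N) i j = blk M i j + blk N i j := by
  ext k l; simp [blk]

lemma blk_one (i j : Fin 2) : blk (1 : M4) i j = if i = j then 1 else 0 := by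
  ext k l
  by_cases h : i = j <;> simp [blk, Matrix.one_apply, Prod.ext_iff, h]

lemma key2 (M : M2) (s0 s1 : ℝ) (h0 : 0 ≤ s0) (h1 : 0 ≤ s1)
    (h : Mᴴ * M = Matrix.diagonal ![(s0 : ℂ) ^ 2, (s1 : ℂ) ^ 2]) :
    ∃ P : M2, IsUnitary2 P ∧ M = P * Matrix.diagonal ![(s0 : ℂ), (s1 : ℂ)] := by
  have e00 : (starRingEnd ℂ) (M 0 0) * M 0 0 + (starRingEnd ℂ) (M 1 0) * M 1 0 = (s0 : ℂ) ^ 2 := by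
    have := congrFun (congrFun h 0) 0
    simpa [Matrix.mul_apply, Fin.sum_univ_two, Matrix.conjTranspose_apply,
      Matrix.diagonal_apply] using this
  have e11 : (starRingEnd ℂ) (M 0 1) * M 0 1 + (starRingEnd ℂ) (M 1 1) * M 1 1 = (s1 : ℂ) ^ 2 := by
    have := congrFun (congrFun h 1) 1
    simpa [Matrix.mul_apply, Fin.sum_univ_two, Matrix.conjTranspose_apply,
      Matrix.diagonal_apply] using this
  have e01 : (starRingEnd ℂ) (M 0 0) * M 0 1 + (starRingEnd ℂ) (M 1 0) * M 1 1 = 0 := by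
    have := congrFun (congrFun h 0) 1
    simpa [Matrix.mul_apply, Fin.sum_univ_two, Matrix.conjTranspose_apply,
      Matrix.diagonal_apply] using this
  
  have colzero : ∀ a b : ℂ, (starRingEnd ℂ) a * a + (starRingEnd ℂ) b * b = 0 → a = 0 ∧ b = 0 := by
    intro a b hab
    rw [← Complex.normSq_eq_conj_mul_self, ← Complex.normSq_eq_conj_mul_self] at hab
    have : Complex.normSq a + Complex.normSq b = 0 := by exact_mod_cast hab
    constructor
    · exact Complex.normSq_eq_zero.mp (by nlinarith [Complex.normSq_nonneg a, Complex.normSq_nonneg b])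
    · exact Complex.normSq_eq_zero.mp (by nlinarith [Complex.normSq_nonneg a, Complex.normSq_nonneg b])
  have e10 : (starRingEnd ℂ) (M 0 1) * M 0 0 + (starRingEnd ℂ) (M 1 1) * M 1 0 = 0 := by
    have := congrFun (congrFun h 1) 0
    simpa [Matrix.mul_apply, Fin.sum_univ_two, Matrix.conjTranspose_apply,
      Matrix.diagonal_apply] using this
  by_cases hs0 : s0 = 0
  · subst hs0
    obtain ⟨hM00, hM10⟩ := colzero (M 0 0) (M 1 0) (by simpa using e00)
    by_cases hs1 : s1 = 0
    · subst hs1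
      obtain ⟨hM01, hM11⟩ := colzero (M 0 1) (M 1 1) (by simpa using e11)
      refine ⟨1, unit2_one, ?_⟩
      ext i j
      fin_cases i <;> fin_cases j <;>
        simp [Matrix.mul_apply, Fin.sum_univ_two, Matrix.diagonal_apply, hM00, hM10, hM01, hM11]
    · have hσ : (s1 : ℂ) ≠ 0 := Complex.ofReal_ne_zero.mpr hs1
      refine ⟨!![-(starRingEnd ℂ) (M 1 1 / s1), M 0 1 / s1;
                 (starRingEnd ℂ) (M 0 1 / s1), M 1 1 / s1], ?_, ?_⟩
      · rw [unit2_iff']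
        ext i j
        fin_cases i <;> fin_cases j <;>
          simp [Matrix.mul_apply, Fin.sum_univ_two, Matrix.conjTranspose_apply, map_div₀,
            Complex.conj_ofReal] <;>
          field_simp <;>
          first | ring1 | linear_combination e11 | linear_combination -e11
      · ext i j
        fin_cases i <;> fin_cases j <;>
          simp [Matrix.mul_apply, Fin.sum_univ_two, Matrix.diagonal_apply, hM00, hM10] <;>
          field_simp
  · have hσ0 : (s0 : ℂ) ≠ 0 := Complex.ofReal_ne_zero.mpr hs0
    by_cases hs1 : s1 = 0
    · subst hs1
      obtain ⟨hM01, hM11⟩ := colzero (M 0 1) (M 1 1) (by simpa using e11)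
      refine ⟨!![M 0 0 / s0, -(starRingEnd ℂ) (M 1 0 / s0);
                 M 1 0 / s0, (starRingEnd ℂ) (M 0 0 / s0)], ?_, ?_⟩
      · rw [unit2_iff']
        ext i j
        fin_cases i <;> fin_cases j <;>
          simp [Matrix.mul_apply, Fin.sum_univ_two, Matrix.conjTranspose_apply, map_div₀,
            Complex.conj_ofReal] <;>
          field_simp <;>
          first | ring1 | linear_combination e00 | linear_combination -e00
      · ext i j
        fin_cases i <;> fin_cases j <;>
          simp [Matrix.mul_apply, Fin.sum_univ_two, Matrix.diagonal_apply, hM01, hM11] <;>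
          field_simp
    · have hσ1 : (s1 : ℂ) ≠ 0 := Complex.ofReal_ne_zero.mpr hs1
      have hDD : Matrix.diagonal ![(s0 : ℂ)⁻¹, (s1 : ℂ)⁻¹] * Matrix.diagonal ![(s0 : ℂ), (s1 : ℂ)]
          = 1 := by
        rw [Matrix.diagonal_mul_diagonal]
        ext i j
        fin_cases i <;> fin_cases j <;> simp [Matrix.diagonal_apply] <;> field_simp
      have hD : (Matrix.diagonal ![(s0 : ℂ)⁻¹, (s1 : ℂ)⁻¹])ᴴ
          = Matrix.diagonal ![(s0 : ℂ)⁻¹, (s1 : ℂ)⁻¹] := by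
        ext i j
        fin_cases i <;> fin_cases j <;>
          simp [Matrix.diagonal_apply, Matrix.conjTranspose_apply, Complex.conj_ofReal]
      refine ⟨M * Matrix.diagonal ![(s0 : ℂ)⁻¹, (s1 : ℂ)⁻¹], ?_, ?_⟩
      · rw [unit2_iff, Matrix.conjTranspose_mul, hD, Matrix.mul_assoc,
          ← Matrix.mul_assoc Mᴴ M, h, Matrix.diagonal_mul_diagonal,
          Matrix.diagonal_mul_diagonal]
        ext i j
        fin_cases i <;> fin_cases j <;> simp [Matrix.diagonal_apply] <;> field_simp <;> ring
      · rw [Matrix.mul_assoc, hDD, Matrix.mul_one]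

open scoped ComplexOrder in
lemma svd2 (A : M2) : ∃ P Q : M2, ∃ s0 s1 : ℝ, 0 ≤ s0 ∧ 0 ≤ s1 ∧
    IsUnitary2 P ∧ IsUnitary2 Q ∧ A = P * Matrix.diagonal ![(s0 : ℂ), (s1 : ℂ)] * Qᴴ := by
  have hH : (Aᴴ * A).IsHermitian := Matrix.isHermitian_conjTranspose_mul_self A
  have hPSD : (Aᴴ * A).PosSemidef := Matrix.posSemidef_conjTranspose_mul_self A
  set Q : M2 := (hH.eigenvectorUnitary : M2) with hQ
  have hQmem : IsUnitary2 Q := hH.eigenvectorUnitary.2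
  have hQ1 : Qᴴ * Q = 1 := unit2_iff.mp hQmem
  have hQ1' : Q * Qᴴ = 1 := unit2_iff'.mp hQmem
  have hs0 : 0 ≤ hH.eigenvalues 0 := hPSD.eigenvalues_nonneg 0
  have hs1 : 0 ≤ hH.eigenvalues 1 := hPSD.eigenvalues_nonneg 1
  have hfn : (RCLike.ofReal ∘ hH.eigenvalues : Fin 2 → ℂ)
      = ![(Real.sqrt (hH.eigenvalues 0) : ℂ) ^ 2, (Real.sqrt (hH.eigenvalues 1) : ℂ) ^ 2] := by
    funext i
    fin_cases i <;> simp [← Complex.ofReal_pow, Real.sq_sqrt, hs0, hs1]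
  have hdiag : Qᴴ * (Aᴴ * A) * Q
      = Matrix.diagonal ![(Real.sqrt (hH.eigenvalues 0) : ℂ) ^ 2,
          (Real.sqrt (hH.eigenvalues 1) : ℂ) ^ 2] := by
    have h2 := hH.conjStarAlgAut_star_eigenvectorUnitary
    rw [Unitary.conjStarAlgAut_apply, Unitary.coe_star, star_star] at h2
    rw [Matrix.star_eq_conjTranspose] at h2
    rw [hQ, h2, hfn]
  have hAQ : ((A * Q)ᴴ) * (A * Q) = Matrix.diagonal ![(Real.sqrt (hH.eigenvalues 0) : ℂ) ^ 2,
      (Real.sqrt (hH.eigenvalues 1) : ℂ) ^ 2] := by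
    rw [Matrix.conjTranspose_mul, ← hdiag]
    simp only [Matrix.mul_assoc]
  obtain ⟨P, hPu, hPe⟩ := key2 (A * Q) _ _ (Real.sqrt_nonneg _) (Real.sqrt_nonneg _) hAQ
  refine ⟨P, Q, Real.sqrt (hH.eigenvalues 0), Real.sqrt (hH.eigenvalues 1),
    Real.sqrt_nonneg _, Real.sqrt_nonneg _, hPu, hQmem, ?_⟩
  have h3 : A * Q * Qᴴ = P * Matrix.diagonal ![(Real.sqrt (hH.eigenvalues 0) : ℂ),
      (Real.sqrt (hH.eigenvalues 1) : ℂ)] * Qᴴ := by rw [hPe]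
  rwa [Matrix.mul_assoc, hQ1', Matrix.mul_one] at h3


lemma E00_add_E11 : E00 + E11 = 1 := by
  ext i j; fin_cases i <;> fin_cases j <;> simp [E00, E11, Matrix.one_apply]
lemma E00_mul_E00 : E00 * E00 = E00 := by
  ext i j; fin_cases i <;> fin_cases j <;> simp [E00, Matrix.mul_apply, Fin.sum_univ_two]
lemma E00_mul_E11 : E00 * E11 = 0 := by
  ext i j; fin_cases i <;> fin_cases j <;> simp [E00, E11, Matrix.mul_apply, Fin.sum_univ_two]
lemma E11_mul_E00 : E11 * E00 = 0 := by
  ext i j; fin_cases i <;> fin_cases j <;> simp [E00, E11, Matrix.mul_apply, Fin.sum_univ_two]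
lemma E11_mul_E11 : E11 * E11 = E11 := by
  ext i j; fin_cases i <;> fin_cases j <;> simp [E11, Matrix.mul_apply, Fin.sum_univ_two]
lemma E00_conjT : E00ᴴ = E00 := by
  ext i j; fin_cases i <;> fin_cases j <;> simp [E00, Matrix.conjTranspose_apply]
lemma E11_conjT : E11ᴴ = E11 := by
  ext i j; fin_cases i <;> fin_cases j <;> simp [E11, Matrix.conjTranspose_apply]

lemma kron_conjT (X Y : M2) : (X ⊗ₖ Y)ᴴ = Xᴴ ⊗ₖ Yᴴ := by
  ext ⟨i, k⟩ ⟨j, l⟩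
  simp [Matrix.conjTranspose_apply, Matrix.kroneckerMap_apply]

lemma mem_Uc_block {X Y : M2} (hX : IsUnitary2 X) (hY : IsUnitary2 Y) :
    (E00 ⊗ₖ X + E11 ⊗ₖ Y) ∈ Uc := by
  refine ⟨1, X, 1, 1, Xᴴ * Y, unit2_one, hX, unit2_one, unit2_one,
    unit2_mul (unit2_star hX) hY, ?_⟩
  have h1 : ((1 : M2) ⊗ₖ X) * (E00 ⊗ₖ (1 : M2)) = E00 ⊗ₖ X := by
    rw [← Matrix.mul_kronecker_mul, Matrix.one_mul, Matrix.mul_one]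
  have h2 : ((1 : M2) ⊗ₖ X) * (E11 ⊗ₖ (Xᴴ * Y)) = E11 ⊗ₖ Y := by
    rw [← Matrix.mul_kronecker_mul, Matrix.one_mul, ← Matrix.mul_assoc,
      unit2_iff'.mp hX, Matrix.one_mul]
  rw [Matrix.one_kronecker_one, Matrix.mul_one, Matrix.mul_add, h1, h2]

/-- diagonal 2x2 -/
def Dc (x y : ℂ) : M2 := Matrix.diagonal ![x, y]

lemma Dc_mul (x y z v : ℂ) : Dc x y * Dc z v = Dc (x * z) (y * v) := by
  rw [Dc, Dc, Dc, Matrix.diagonal_mul_diagonal]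
  ext i j; fin_cases i <;> fin_cases j <;> simp [Matrix.diagonal_apply]
lemma Dc_add (x y z v : ℂ) : Dc x y + Dc z v = Dc (x + z) (y + v) := by
  rw [Dc, Dc, Dc, Matrix.diagonal_add]
  ext i j; fin_cases i <;> fin_cases j <;> simp [Matrix.diagonal_apply]
lemma Dc_conjT (x y : ℂ) : (Dc x y)ᴴ = Dc ((starRingEnd ℂ) x) ((starRingEnd ℂ) y) := by
  ext i j
  fin_cases i <;> fin_cases j <;> simp [Dc, Matrix.diagonal_apply, Matrix.conjTranspose_apply]
lemma Dc_zero : Dc 0 0 = 0 := by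
  ext i j; fin_cases i <;> fin_cases j <;> simp [Dc, Matrix.diagonal_apply]
lemma Dc_one : Dc 1 1 = 1 := by
  ext i j; fin_cases i <;> fin_cases j <;> simp [Dc, Matrix.diagonal_apply, Matrix.one_apply]
lemma smul_E_diag (x y : ℂ) : x • E00 + y • E11 = Dc x y := by
  ext i j
  fin_cases i <;> fin_cases j <;> simp [Dc, E00, E11, Matrix.diagonal_apply]

def Ry (s t : ℝ) : M2 := !![(s : ℂ), -(t : ℂ); (t : ℂ), (s : ℂ)]

lemma Ry_unitary (s t : ℝ) (h : s ^ 2 + t ^ 2 = 1) : IsUnitary2 (Ry s t) := by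
  have hc : (s : ℂ) ^ 2 + (t : ℂ) ^ 2 = 1 := by exact_mod_cast congrArg (Complex.ofReal) h
  rw [unit2_iff']
  ext i j
  fin_cases i <;> fin_cases j <;>
    simp [Ry, Matrix.mul_apply, Fin.sum_univ_two, Matrix.conjTranspose_apply,
      Complex.conj_ofReal, Matrix.one_apply] <;>
    first | linear_combination hc | linear_combination -hc | ring1

lemma Dc_smul (x a b : ℂ) : x • Dc a b = Dc (x * a) (x * b) := by
  ext i j; fin_cases i <;> fin_cases j <;> simp [Dc, Matrix.diagonal_apply]

lemma G_mem_Uc (s0 t0 s1 t1 : ℝ) (h0 : s0 ^ 2 + t0 ^ 2 = 1) (h1 : s1 ^ 2 + t1 ^ 2 = 1) :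
    (Ry s0 t0 ⊗ₖ E00 + Ry s1 t1 ⊗ₖ E11) ∈ Uc := by
  have h0c : (s0 : ℂ) ^ 2 + (t0 : ℂ) ^ 2 = 1 := by exact_mod_cast congrArg (Complex.ofReal) h0
  have h1c : (s1 : ℂ) ^ 2 + (t1 : ℂ) ^ 2 = 1 := by exact_mod_cast congrArg (Complex.ofReal) h1
  set e : ℂ := ((s0 * s1 + t0 * t1 : ℝ) : ℂ) + ((s0 * t1 - t0 * s1 : ℝ) : ℂ) * Complex.I with he_def
  set eb : ℂ := ((s0 * s1 + t0 * t1 : ℝ) : ℂ) - ((s0 * t1 - t0 * s1 : ℝ) : ℂ) * Complex.I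
    with heb_def
  have he : e * eb = 1 := by
    rw [he_def, heb_def]
    push_cast
    linear_combination ((s1 : ℂ) ^ 2 + (t1 : ℂ) ^ 2) * h0c + h1c -
      ((s0 : ℂ) * t1 - t0 * s1) ^ 2 * Complex.I_sq - ((s0 : ℂ) * t1 - t0 * s1) ^ 2
  have hce : (starRingEnd ℂ) e = eb := by
    rw [he_def, heb_def]
    simp [Complex.conj_ofReal]
    ring
  have hceb : (starRingEnd ℂ) eb = e := by
    rw [he_def, heb_def]
    simp [Complex.conj_ofReal]
  set c2 : ℂ := ((Real.sqrt 2 / 2 : ℝ) : ℂ) with hc2_def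
  have hc2 : c2 * c2 = 1 / 2 := by
    have h2' : (Real.sqrt 2 / 2) * (Real.sqrt 2 / 2) = 1 / 2 := by
      rw [div_mul_div_comm, Real.mul_self_sqrt (by norm_num : (0:ℝ) ≤ 2)]
      norm_num
    rw [hc2_def, ← Complex.ofReal_mul, h2']
    norm_num
  have hc2c : (starRingEnd ℂ) c2 = c2 := Complex.conj_ofReal _
  set u : M2 := !![c2, c2; -Complex.I * c2, Complex.I * c2] with hu_def
  have huu : u * uᴴ = 1 := by
    ext i j
    fin_cases i <;> fin_cases j <;>
      simp [hu_def, Matrix.mul_apply, Fin.sum_univ_two, Matrix.conjTranspose_apply,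
        hc2c, Complex.conj_I, Matrix.one_apply] <;>
      first
        | linear_combination 2 * hc2
        | linear_combination (-2 * Complex.I ^ 2) * hc2 - Complex.I_sq
        | linear_combination (2 * Complex.I ^ 2) * hc2 + Complex.I_sq
        | ring1
  have huα : IsUnitary2 u := unit2_iff'.mpr huu
  have hbu : IsUnitary2 (Dc 1 e) := by
    rw [unit2_iff', Dc_conjT, Dc_mul, hce, he]
    simpa using Dc_one
  have hwu : IsUnitary2 (Dc 1 (eb * eb)) := by
    have h2 : eb * eb * (e * e) = 1 := by linear_combination (e * eb + 1) * he
    rw [unit2_iff', Dc_conjT, Dc_mul]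
    simp only [_root_.map_one, one_mul, _root_.map_mul]
    rw [hceb, h2]
    simpa using Dc_one
  refine ⟨Ry s0 t0 * u, Dc 1 e, uᴴ, 1, Dc 1 (eb * eb),
    unit2_mul (Ry_unitary s0 t0 h0) huα, hbu, unit2_star huα, unit2_one, hwu, ?_⟩
  have hbw : Dc 1 e * Dc 1 (eb * eb) = Dc 1 eb := by
    rw [Dc_mul, one_mul, show e * (eb * eb) = eb by linear_combination eb * he]
  have hsplit : ((Ry s0 t0 * u) ⊗ₖ Dc 1 e) * (E00 ⊗ₖ (1 : M2) + E11 ⊗ₖ Dc 1 (eb * eb)) *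
        (uᴴ ⊗ₖ (1 : M2))
      = (Ry s0 t0 * u * E00 * uᴴ) ⊗ₖ (Dc 1 e) + (Ry s0 t0 * u * E11 * uᴴ) ⊗ₖ (Dc 1 eb) := by
    rw [Matrix.mul_add, Matrix.add_mul]
    simp only [← Matrix.mul_kronecker_mul, Matrix.mul_one]
    rw [hbw]
  rw [hsplit]
  apply M4_ext
  intro i j
  rw [blk_add, blk_add, blk_kron, blk_kron, blk_kron, blk_kron, smul_E_diag,
    Dc_smul, Dc_smul, Dc_add]
  ext k l
  fin_cases i <;> fin_cases j <;> fin_cases k <;> fin_cases l <;>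
    simp [Dc, Matrix.diagonal_apply, Ry, Matrix.mul_apply, Fin.sum_univ_two, hu_def, E00, E11,
      Matrix.conjTranspose_apply, hc2c, Complex.conj_I, Complex.conj_ofReal, he_def, heb_def] <;>
    first
      | ring1
      | linear_combination 2*(s0:ℂ)*hc2
      | linear_combination -(2*(s0:ℂ)*hc2)
      | linear_combination 2*(t0:ℂ)*hc2
      | linear_combination -(2*(t0:ℂ)*hc2)
      | linear_combination (2*(t0:ℂ)*Complex.I^2)*hc2 + (t0:ℂ)*Complex.I_sq
      | linear_combination -((2*(t0:ℂ)*Complex.I^2)*hc2 + (t0:ℂ)*Complex.I_sq)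
      | linear_combination (-2*(s0:ℂ)*Complex.I^2)*hc2 - (s0:ℂ)*Complex.I_sq
      | linear_combination -((-2*(s0:ℂ)*Complex.I^2)*hc2 - (s0:ℂ)*Complex.I_sq)
      | linear_combination (2*(s0:ℂ)*((s0:ℂ)*s1+(t0:ℂ)*t1) + 2*(t0:ℂ)*((s0:ℂ)*t1-(t0:ℂ)*s1)*Complex.I^2)*hc2 + (t0:ℂ)*((s0:ℂ)*t1-(t0:ℂ)*s1)*Complex.I_sq + (s1:ℂ)*h0c
      | linear_combination -((2*(s0:ℂ)*((s0:ℂ)*s1+(t0:ℂ)*t1) + 2*(t0:ℂ)*((s0:ℂ)*t1-(t0:ℂ)*s1)*Complex.I^2)*hc2 + (t0:ℂ)*((s0:ℂ)*t1-(t0:ℂ)*s1)*Complex.I_sq + (s1:ℂ)*h0c)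
      | linear_combination (2*Complex.I^2*((s0:ℂ)*((s0:ℂ)*t1-(t0:ℂ)*s1) + (t0:ℂ)*((s0:ℂ)*s1+(t0:ℂ)*t1)))*hc2 + ((s0:ℂ)*((s0:ℂ)*t1-(t0:ℂ)*s1)+(t0:ℂ)*((s0:ℂ)*s1+(t0:ℂ)*t1))*Complex.I_sq - (t1:ℂ)*h0c
      | linear_combination -((2*Complex.I^2*((s0:ℂ)*((s0:ℂ)*t1-(t0:ℂ)*s1) + (t0:ℂ)*((s0:ℂ)*s1+(t0:ℂ)*t1)))*hc2 + ((s0:ℂ)*((s0:ℂ)*t1-(t0:ℂ)*s1)+(t0:ℂ)*((s0:ℂ)*s1+(t0:ℂ)*t1))*Complex.I_sq - (t1:ℂ)*h0c)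
      | linear_combination (2*(t0:ℂ)*((s0:ℂ)*s1+(t0:ℂ)*t1) - 2*(s0:ℂ)*((s0:ℂ)*t1-(t0:ℂ)*s1)*Complex.I^2)*hc2 - (s0:ℂ)*((s0:ℂ)*t1-(t0:ℂ)*s1)*Complex.I_sq + (t1:ℂ)*h0c
      | linear_combination -((2*(t0:ℂ)*((s0:ℂ)*s1+(t0:ℂ)*t1) - 2*(s0:ℂ)*((s0:ℂ)*t1-(t0:ℂ)*s1)*Complex.I^2)*hc2 - (s0:ℂ)*((s0:ℂ)*t1-(t0:ℂ)*s1)*Complex.I_sq + (t1:ℂ)*h0c)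
      | linear_combination (2*Complex.I^2*((t0:ℂ)*((s0:ℂ)*t1-(t0:ℂ)*s1) - (s0:ℂ)*((s0:ℂ)*s1+(t0:ℂ)*t1)))*hc2 + ((t0:ℂ)*((s0:ℂ)*t1-(t0:ℂ)*s1) - (s0:ℂ)*((s0:ℂ)*s1+(t0:ℂ)*t1))*Complex.I_sq + (s1:ℂ)*h0c
      | linear_combination -((2*Complex.I^2*((t0:ℂ)*((s0:ℂ)*t1-(t0:ℂ)*s1) - (s0:ℂ)*((s0:ℂ)*s1+(t0:ℂ)*t1)))*hc2 + ((t0:ℂ)*((s0:ℂ)*t1-(t0:ℂ)*s1) - (s0:ℂ)*((s0:ℂ)*s1+(t0:ℂ)*t1))*Complex.I_sq + (s1:ℂ)*h0c)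

lemma one_sub_Dc (a b : ℂ) : (1 : M2) - Dc a b = Dc (1 - a) (1 - b) := by
  ext i j
  fin_cases i <;> fin_cases j <;> simp [Dc, Matrix.diagonal_apply, Matrix.one_apply]


/-- every two-qubit unitary is a product of three controlled-unitaries up to
local unitaries. -/
theorem stmt6 (W : M4) (hW : IsUnitary4 W) :
    ∃ U V X : M4, U ∈ Uc ∧ V ∈ Uc ∧ X ∈ Uc ∧ W = U * V * X := by
  have hWu : Wᴴ * W = 1 := by
    have h := hW
    unfold IsUnitary4 at h
    rw [Matrix.mem_unitaryGroup_iff', Matrix.star_eq_conjTranspose] at h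
    exact h
  obtain ⟨P, Q, s0, s1, hs0n, hs1n, hPu, hQu, hA⟩ := svd2 (blk W 0 0)
  have hP1 : Pᴴ * P = 1 := unit2_iff.mp hPu
  have hQ1 : Qᴴ * Q = 1 := unit2_iff.mp hQu
  have hQ1' : Q * Qᴴ = 1 := unit2_iff'.mp hQu
  have hA' : blk W 0 0 = P * Dc (s0 : ℂ) (s1 : ℂ) * Qᴴ := hA
  have hb00 : (blk W 0 0)ᴴ * blk W 0 0 + (blk W 1 0)ᴴ * blk W 1 0 = 1 := by
    have h := blk_mul Wᴴ W 0 0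
    rw [hWu, blk_one, blk_conjT, blk_conjT] at h
    simpa using h.symm
  have hb01 : (blk W 0 0)ᴴ * blk W 0 1 + (blk W 1 0)ᴴ * blk W 1 1 = 0 := by
    have h := blk_mul Wᴴ W 0 1
    rw [hWu, blk_one, blk_conjT, blk_conjT] at h
    simpa using h.symm
  have hDs : (Dc (s0 : ℂ) (s1 : ℂ))ᴴ = Dc (s0 : ℂ) (s1 : ℂ) := by
    rw [Dc_conjT, Complex.conj_ofReal, Complex.conj_ofReal]
  have hAH : (blk W 0 0)ᴴ = Q * Dc (s0 : ℂ) (s1 : ℂ) * Pᴴ := by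
    rw [hA', Matrix.conjTranspose_mul, Matrix.conjTranspose_mul, hDs,
      Matrix.conjTranspose_conjTranspose, Matrix.mul_assoc]
  set X : M2 := blk W 1 0 * Q with hXdef
  have hXX : Xᴴ * X = Dc (1 - (s0 : ℂ) ^ 2) (1 - (s1 : ℂ) ^ 2) := by
    have hCC : (blk W 1 0)ᴴ * blk W 1 0 = 1 - (blk W 0 0)ᴴ * blk W 0 0 :=
      eq_sub_of_add_eq' hb00
    rw [hXdef, Matrix.conjTranspose_mul]
    calc Qᴴ * (blk W 1 0)ᴴ * (blk W 1 0 * Q)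
        = Qᴴ * ((blk W 1 0)ᴴ * blk W 1 0) * Q := by simp only [Matrix.mul_assoc]
      _ = Qᴴ * (1 - (blk W 0 0)ᴴ * blk W 0 0) * Q := by rw [hCC]
      _ = Qᴴ * Q - Qᴴ * ((blk W 0 0)ᴴ * blk W 0 0) * Q := by
          rw [Matrix.mul_sub, Matrix.sub_mul, Matrix.mul_one]
      _ = 1 - Dc ((s0 : ℂ) * s0) ((s1 : ℂ) * s1) := by
          rw [hQ1, hAH, hA']
          simp only [Matrix.mul_assoc]
          rw [hQ1, Matrix.mul_one, ← Matrix.mul_assoc Pᴴ P, hP1, Matrix.one_mul, Dc_mul,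
            ← Matrix.mul_assoc Qᴴ Q, hQ1, Matrix.one_mul]
      _ = Dc (1 - (s0 : ℂ) ^ 2) (1 - (s1 : ℂ) ^ 2) := by
          rw [one_sub_Dc, sq, sq]
  have hnn0 : 0 ≤ 1 - s0 ^ 2 := by
    have h := congrFun (congrFun hXX 0) 0
    simp only [Matrix.mul_apply, Matrix.conjTranspose_apply, Fin.sum_univ_two, Dc,
      Matrix.diagonal_apply, if_true, Matrix.cons_val_zero, Matrix.of_apply] at h
    simp only [Complex.star_def] at h
    rw [← Complex.normSq_eq_conj_mul_self, ← Complex.normSq_eq_conj_mul_self] at h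
    have hr : Complex.normSq (X 0 0) + Complex.normSq (X 1 0) = 1 - s0 ^ 2 := by
      have h2 : ((Complex.normSq (X 0 0) + Complex.normSq (X 1 0) : ℝ) : ℂ)
          = ((1 - s0 ^ 2 : ℝ) : ℂ) := by push_cast; exact h
      exact_mod_cast h2
    nlinarith [Complex.normSq_nonneg (X 0 0), Complex.normSq_nonneg (X 1 0)]
  have hnn1 : 0 ≤ 1 - s1 ^ 2 := by
    have h := congrFun (congrFun hXX 1) 1
    simp only [Matrix.mul_apply, Matrix.conjTranspose_apply, Fin.sum_univ_two, Dc,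
      Matrix.diagonal_apply, if_true, Matrix.cons_val_one, Matrix.head_cons,
      Matrix.of_apply] at h
    simp only [Complex.star_def] at h
    rw [← Complex.normSq_eq_conj_mul_self, ← Complex.normSq_eq_conj_mul_self] at h
    have hr : Complex.normSq (X 0 1) + Complex.normSq (X 1 1) = 1 - s1 ^ 2 := by
      have h2 : ((Complex.normSq (X 0 1) + Complex.normSq (X 1 1) : ℝ) : ℂ)
          = ((1 - s1 ^ 2 : ℝ) : ℂ) := by push_cast; exact h
      exact_mod_cast h2
    nlinarith [Complex.normSq_nonneg (X 0 1), Complex.normSq_nonneg (X 1 1)]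
  set t0 : ℝ := Real.sqrt (1 - s0 ^ 2) with ht0def
  set t1 : ℝ := Real.sqrt (1 - s1 ^ 2) with ht1def
  have ht0sq : t0 ^ 2 = 1 - s0 ^ 2 := Real.sq_sqrt hnn0
  have ht1sq : t1 ^ 2 = 1 - s1 ^ 2 := Real.sq_sqrt hnn1
  have h0sum : s0 ^ 2 + t0 ^ 2 = 1 := by linarith
  have h1sum : s1 ^ 2 + t1 ^ 2 = 1 := by linarith
  have hc0 : (1 : ℂ) - (s0 : ℂ) ^ 2 = (t0 : ℂ) ^ 2 := by
    have h2 := congrArg Complex.ofReal ht0sq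
    push_cast at h2
    linear_combination -h2
  have hc1 : (1 : ℂ) - (s1 : ℂ) ^ 2 = (t1 : ℂ) ^ 2 := by
    have h2 := congrArg Complex.ofReal ht1sq
    push_cast at h2
    linear_combination -h2
  have hXXt : Xᴴ * X = Matrix.diagonal ![(t0 : ℂ) ^ 2, (t1 : ℂ) ^ 2] := by
    rw [hXX, hc0, hc1]; rfl
  obtain ⟨C', hC'u, hXe⟩ := key2 X t0 t1 (Real.sqrt_nonneg _) (Real.sqrt_nonneg _) hXXt
  have hC'1 : C'ᴴ * C' = 1 := unit2_iff.mp hC'u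
  have hC : blk W 1 0 = C' * Dc (t0 : ℂ) (t1 : ℂ) * Qᴴ := by
    have h := congrArg (fun M => M * Qᴴ) hXe
    simp only [hXdef] at h
    rw [Matrix.mul_assoc, hQ1', Matrix.mul_one] at h
    exact h
  have hDt : (Dc (t0 : ℂ) (t1 : ℂ))ᴴ = Dc (t0 : ℂ) (t1 : ℂ) := by
    rw [Dc_conjT, Complex.conj_ofReal, Complex.conj_ofReal]
  have hCH : (blk W 1 0)ᴴ = Q * Dc (t0 : ℂ) (t1 : ℂ) * C'ᴴ := by
    rw [hC, Matrix.conjTranspose_mul, Matrix.conjTranspose_mul, hDt,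
      Matrix.conjTranspose_conjTranspose, Matrix.mul_assoc]
  set L : M4 := E00 ⊗ₖ P + E11 ⊗ₖ C' with hLdef
  set Gm : M4 := Ry s0 t0 ⊗ₖ E00 + Ry s1 t1 ⊗ₖ E11 with hGdef
  set Nm : M4 := Gmᴴ * (Lᴴ * W) with hNdef
  have hR0u := Ry_unitary s0 t0 h0sum
  have hR1u := Ry_unitary s1 t1 h1sum
  have hLL : L * Lᴴ = 1 := by
    rw [hLdef, Matrix.conjTranspose_add, kron_conjT, kron_conjT, E00_conjT, E11_conjT,
      Matrix.add_mul, Matrix.mul_add, Matrix.mul_add,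
      ← Matrix.mul_kronecker_mul, ← Matrix.mul_kronecker_mul,
      ← Matrix.mul_kronecker_mul, ← Matrix.mul_kronecker_mul,
      E00_mul_E00, E00_mul_E11, E11_mul_E00, E11_mul_E11,
      unit2_iff'.mp hPu, unit2_iff'.mp hC'u,
      Matrix.zero_kronecker, Matrix.zero_kronecker, add_zero, zero_add,
      ← Matrix.add_kronecker, E00_add_E11, Matrix.one_kronecker_one]
  have hGG : Gm * Gmᴴ = 1 := by
    rw [hGdef, Matrix.conjTranspose_add, kron_conjT, kron_conjT, E00_conjT, E11_conjT,
      Matrix.add_mul, Matrix.mul_add, Matrix.mul_add,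
      ← Matrix.mul_kronecker_mul, ← Matrix.mul_kronecker_mul,
      ← Matrix.mul_kronecker_mul, ← Matrix.mul_kronecker_mul,
      E00_mul_E00, E00_mul_E11, E11_mul_E00, E11_mul_E11,
      unit2_iff'.mp hR0u, unit2_iff'.mp hR1u,
      Matrix.kronecker_zero, Matrix.kronecker_zero, add_zero, zero_add,
      ← Matrix.kronecker_add, E00_add_E11, Matrix.one_kronecker_one]
  have hLmem : L ∈ Matrix.unitaryGroup (Fin 2 × Fin 2) ℂ := by
    rw [Matrix.mem_unitaryGroup_iff, Matrix.star_eq_conjTranspose]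
    exact hLL
  have hGmem : Gm ∈ Matrix.unitaryGroup (Fin 2 × Fin 2) ℂ := by
    rw [Matrix.mem_unitaryGroup_iff, Matrix.star_eq_conjTranspose]
    exact hGG
  have hNmem : Nm ∈ Matrix.unitaryGroup (Fin 2 × Fin 2) ℂ := by
    rw [hNdef]
    exact mul_mem (Unitary.star_mem hGmem) (mul_mem (Unitary.star_mem hLmem) hW)
  have hNN : Nmᴴ * Nm = 1 := by
    have h := Matrix.mem_unitaryGroup_iff'.mp hNmem
    rwa [Matrix.star_eq_conjTranspose] at h
  have bL00 : blk L 0 0 = P := by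
    rw [hLdef, blk_add, blk_kron, blk_kron]
    simp [E00, E11]
  have bL01 : blk L 0 1 = 0 := by
    rw [hLdef, blk_add, blk_kron, blk_kron]
    simp [E00, E11]
  have bL10 : blk L 1 0 = 0 := by
    rw [hLdef, blk_add, blk_kron, blk_kron]
    simp [E00, E11]
  have bL11 : blk L 1 1 = C' := by
    rw [hLdef, blk_add, blk_kron, blk_kron]
    simp [E00, E11]
  have bG00 : blk Gm 0 0 = Dc (s0 : ℂ) (s1 : ℂ) := by
    rw [hGdef, blk_add, blk_kron, blk_kron,
      show Ry s0 t0 0 0 = (s0 : ℂ) from by simp [Ry],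
      show Ry s1 t1 0 0 = (s1 : ℂ) from by simp [Ry], smul_E_diag]
  have bG01 : blk Gm 0 1 = Dc (-(t0 : ℂ)) (-(t1 : ℂ)) := by
    rw [hGdef, blk_add, blk_kron, blk_kron,
      show Ry s0 t0 0 1 = -(t0 : ℂ) from by simp [Ry],
      show Ry s1 t1 0 1 = -(t1 : ℂ) from by simp [Ry], smul_E_diag]
  have bG10 : blk Gm 1 0 = Dc (t0 : ℂ) (t1 : ℂ) := by
    rw [hGdef, blk_add, blk_kron, blk_kron,
      show Ry s0 t0 1 0 = (t0 : ℂ) from by simp [Ry],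
      show Ry s1 t1 1 0 = (t1 : ℂ) from by simp [Ry], smul_E_diag]
  have bG11 : blk Gm 1 1 = Dc (s0 : ℂ) (s1 : ℂ) := by
    rw [hGdef, blk_add, blk_kron, blk_kron,
      show Ry s0 t0 1 1 = (s0 : ℂ) from by simp [Ry],
      show Ry s1 t1 1 1 = (s1 : ℂ) from by simp [Ry], smul_E_diag]
  have bLW0 : ∀ j, blk (Lᴴ * W) 0 j = Pᴴ * blk W 0 j := by
    intro j
    rw [blk_mul, blk_conjT, blk_conjT, bL00, bL10, Matrix.conjTranspose_zero,
      Matrix.zero_mul, add_zero]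
  have bLW1 : ∀ j, blk (Lᴴ * W) 1 j = C'ᴴ * blk W 1 j := by
    intro j
    rw [blk_mul, blk_conjT, blk_conjT, bL01, bL11, Matrix.conjTranspose_zero,
      Matrix.zero_mul, zero_add]
  have hPA : Pᴴ * blk W 0 0 = Dc (s0 : ℂ) (s1 : ℂ) * Qᴴ := by
    rw [hA', ← Matrix.mul_assoc, ← Matrix.mul_assoc Pᴴ P, hP1, Matrix.one_mul]
  have hCA : C'ᴴ * blk W 1 0 = Dc (t0 : ℂ) (t1 : ℂ) * Qᴴ := by
    rw [hC, ← Matrix.mul_assoc, ← Matrix.mul_assoc C'ᴴ C', hC'1, Matrix.one_mul]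
  have bN10 : blk Nm 1 0 = 0 := by
    rw [hNdef, blk_mul, blk_conjT, blk_conjT, bG01, bG11, bLW0, bLW1, hPA, hCA, hDs,
      Dc_conjT, ← Matrix.mul_assoc, ← Matrix.mul_assoc, Dc_mul, Dc_mul, ← Matrix.add_mul,
      Dc_add]
    simp only [map_neg, Complex.conj_ofReal]
    rw [show -(t0 : ℂ) * s0 + s0 * t0 = 0 from by ring,
      show -(t1 : ℂ) * s1 + s1 * t1 = 0 from by ring, Dc_zero, Matrix.zero_mul]
  have bN01 : blk Nm 0 1 = 0 := by
    rw [hNdef, blk_mul, blk_conjT, blk_conjT, bG00, bG10, bLW0, bLW1, hDs, hDt]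
    have hq : Q * (Dc (s0 : ℂ) (s1 : ℂ) * (Pᴴ * blk W 0 1)
        + Dc (t0 : ℂ) (t1 : ℂ) * (C'ᴴ * blk W 1 1)) = 0 := by
      rw [Matrix.mul_add]
      simp only [← Matrix.mul_assoc]
      rw [← hAH, ← hCH]
      exact hb01
    have h2 := congrArg (fun M => Qᴴ * M) hq
    simp only [Matrix.mul_zero] at h2
    rw [← Matrix.mul_assoc, hQ1, Matrix.one_mul] at h2
    exact h2
  have hN00 : (blk Nm 0 0)ᴴ * blk Nm 0 0 = 1 := by
    have h := blk_mul Nmᴴ Nm 0 0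
    rw [hNN, blk_one, blk_conjT, blk_conjT, bN10] at h
    simpa using h.symm
  have hN11 : (blk Nm 1 1)ᴴ * blk Nm 1 1 = 1 := by
    have h := blk_mul Nmᴴ Nm 1 1
    rw [hNN, blk_one, blk_conjT, blk_conjT, bN01] at h
    simpa using h.symm
  have hNdec : Nm = E00 ⊗ₖ blk Nm 0 0 + E11 ⊗ₖ blk Nm 1 1 := by
    apply M4_ext
    intro i j
    rw [blk_add, blk_kron, blk_kron]
    fin_cases i <;> fin_cases j <;> simp [E00, E11, bN01, bN10]
  have hWform : W = L * (Gm * Nm) := by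
    rw [hNdef, ← Matrix.mul_assoc Gm Gmᴴ, hGG, Matrix.one_mul, ← Matrix.mul_assoc L Lᴴ,
      hLL, Matrix.one_mul]
  refine ⟨L, Gm, Nm, ?_, ?_, ?_, ?_⟩
  · rw [hLdef]
    exact mem_Uc_block hPu hC'u
  · rw [hGdef]
    exact G_mem_Uc s0 t0 s1 t1 h0sum h1sum
  · rw [hNdec]
    exact mem_Uc_block (unit2_iff.mpr hN00) (unit2_iff.mpr hN11)
  · rw [hWform, Matrix.mul_assoc]

end
end

section
/- Suppose αx, αy, αz ∈ ℝ satisfy sin(2αx) ≠ 0, sin(2αy) ≠ 0 and sin(2αz) ≠ 0, and let U₀ = exp(i(αx·X⊗X + αy·Y⊗Y + αz·Z⊗Z)). Then for every a, b ∈ ℂ with |a|² + |b|² = 1 and φ = (a,b)·(a,b)† the associated rank-one projector, the map ρ ↦ Tr_B[U₀ · (ρ ⊗ φ) · U₀†] is not unital: Tr_B[U₀ · (I₂ ⊗ φ) · U₀†] ≠ I₂. -/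
open Matrix Kronecker Complex

set_option maxHeartbeats 2000000

noncomputable section

def Dz (α : ℝ) : M4 := Matrix.diagonal fun p =>
  if p.1 = p.2 then Complex.exp (α * Complex.I) else Complex.exp (-α * Complex.I)

lemma expZZ (α : ℝ) : NormedSpace.exp (((α : ℂ) * Complex.I) • (PZ ⊗ₖ PZ)) = Dz α := by
  have h : ((α : ℂ) * Complex.I) • (PZ ⊗ₖ PZ) = Matrix.diagonal (fun p : Fin 2 × Fin 2 =>
      if p.1 = p.2 then (α : ℂ) * Complex.I else -α * Complex.I) := by
    ext ⟨i, k⟩ ⟨j, l⟩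
    fin_cases i <;> fin_cases k <;> fin_cases j <;> fin_cases l <;>
      simp [PZ, Matrix.diagonal, Matrix.kroneckerMap_apply, Prod.ext_iff] <;> ring
  rw [h, Matrix.exp_diagonal, Pi.exp_def]
  simp only [apply_ite NormedSpace.exp, ← Complex.exp_eq_exp_ℂ]
  rfl

lemma exp_conj_helper (α : ℝ) (P W Wi : M4) (h1 : W * Wi = 1) (h2 : Wi * W = 1)
    (hconj : P = W * (PZ ⊗ₖ PZ) * Wi) :
    NormedSpace.exp (((α : ℂ) * Complex.I) • P) = W * Dz α * Wi := by
  let U : (M4)ˣ := ⟨W, Wi, h1, h2⟩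
  have key : ((α : ℂ) * Complex.I) • P =
      (U : M4) * (((α : ℂ) * Complex.I) • (PZ ⊗ₖ PZ)) * (↑U⁻¹ : M4) := by
    show _ = W * _ * Wi
    rw [hconj, Matrix.mul_smul, Matrix.smul_mul]
  rw [key, Matrix.exp_units_conj, expZZ]
  rfl

def Hd : M2 := !![1, 1; 1, -1]
def Ty : M2 := !![1, 1; Complex.I, -Complex.I]
def Tyi : M2 := !![1/2, -Complex.I/2; 1/2, Complex.I/2]

def Ex (α : ℝ) : M4 := Matrix.of fun p q =>
  if p = q then ((Real.cos α : ℝ) : ℂ)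
  else if p.1 ≠ q.1 ∧ p.2 ≠ q.2 then ((Real.sin α : ℝ) : ℂ) * Complex.I else 0

def Ey (α : ℝ) : M4 := Matrix.of fun p q =>
  if p = q then ((Real.cos α : ℝ) : ℂ)
  else if p.1 ≠ q.1 ∧ p.2 ≠ q.2 then
    (if p.1 = p.2 then -(((Real.sin α : ℝ) : ℂ) * Complex.I) else ((Real.sin α : ℝ) : ℂ) * Complex.I)
  else 0

lemma expXX (α : ℝ) : NormedSpace.exp (((α : ℂ) * Complex.I) • (PX ⊗ₖ PX)) = Ex α := by
  have h1 : (Hd ⊗ₖ Hd) * ((4 : ℂ)⁻¹ • (Hd ⊗ₖ Hd)) = 1 := by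
    ext ⟨i, k⟩ ⟨j, l⟩
    fin_cases i <;> fin_cases k <;> fin_cases j <;> fin_cases l <;>
      simp [Hd, Matrix.mul_apply, Fintype.sum_prod_type, Fin.sum_univ_two,
        Matrix.kroneckerMap_apply, Matrix.one_apply, Prod.ext_iff] <;> ring
  have h2 : ((4 : ℂ)⁻¹ • (Hd ⊗ₖ Hd)) * (Hd ⊗ₖ Hd) = 1 := by
    ext ⟨i, k⟩ ⟨j, l⟩
    fin_cases i <;> fin_cases k <;> fin_cases j <;> fin_cases l <;>
      simp [Hd, Matrix.mul_apply, Fintype.sum_prod_type, Fin.sum_univ_two,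
        Matrix.kroneckerMap_apply, Matrix.one_apply, Prod.ext_iff] <;> ring
  have hconj : PX ⊗ₖ PX = (Hd ⊗ₖ Hd) * (PZ ⊗ₖ PZ) * ((4 : ℂ)⁻¹ • (Hd ⊗ₖ Hd)) := by
    ext ⟨i, k⟩ ⟨j, l⟩
    fin_cases i <;> fin_cases k <;> fin_cases j <;> fin_cases l <;>
      simp [Hd, PX, PZ, Matrix.mul_apply, Fintype.sum_prod_type, Fin.sum_univ_two,
        Matrix.kroneckerMap_apply, Prod.ext_iff] <;> ring
  rw [exp_conj_helper α _ _ _ h1 h2 hconj]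
  ext ⟨i, k⟩ ⟨j, l⟩
  fin_cases i <;> fin_cases k <;> fin_cases j <;> fin_cases l <;>
    simp [Hd, Ex, Dz, Matrix.mul_apply, Fintype.sum_prod_type, Fin.sum_univ_two,
      Matrix.kroneckerMap_apply, Matrix.diagonal, Prod.ext_iff, Complex.ofReal_cos,
      Complex.ofReal_sin, Complex.cos, Complex.sin] <;> ring_nf <;>
    simp [Complex.I_sq] <;> ring_nf

lemma expYY (α : ℝ) : NormedSpace.exp (((α : ℂ) * Complex.I) • (PY ⊗ₖ PY)) = Ey α := by
  have h1 : (Ty ⊗ₖ Ty) * (Tyi ⊗ₖ Tyi) = 1 := by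
    ext ⟨i, k⟩ ⟨j, l⟩
    fin_cases i <;> fin_cases k <;> fin_cases j <;> fin_cases l <;>
      simp [Ty, Tyi, Matrix.mul_apply, Fintype.sum_prod_type, Fin.sum_univ_two,
        Matrix.kroneckerMap_apply, Matrix.one_apply, Prod.ext_iff] <;> ring_nf <;>
      simp [Complex.I_sq] <;> ring
  have h2 : (Tyi ⊗ₖ Tyi) * (Ty ⊗ₖ Ty) = 1 := by
    ext ⟨i, k⟩ ⟨j, l⟩
    fin_cases i <;> fin_cases k <;> fin_cases j <;> fin_cases l <;>
      simp [Ty, Tyi, Matrix.mul_apply, Fintype.sum_prod_type, Fin.sum_univ_two,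
        Matrix.kroneckerMap_apply, Matrix.one_apply, Prod.ext_iff] <;> ring_nf <;>
      simp [Complex.I_sq] <;> ring
  have hconj : PY ⊗ₖ PY = (Ty ⊗ₖ Ty) * (PZ ⊗ₖ PZ) * (Tyi ⊗ₖ Tyi) := by
    ext ⟨i, k⟩ ⟨j, l⟩
    fin_cases i <;> fin_cases k <;> fin_cases j <;> fin_cases l <;>
      simp [Ty, Tyi, PY, PZ, Matrix.mul_apply, Fintype.sum_prod_type, Fin.sum_univ_two,
        Matrix.kroneckerMap_apply, Prod.ext_iff] <;> ring_nf <;>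
      simp [Complex.I_sq] <;> ring
  rw [exp_conj_helper α _ _ _ h1 h2 hconj]
  ext ⟨i, k⟩ ⟨j, l⟩
  fin_cases i <;> fin_cases k <;> fin_cases j <;> fin_cases l <;>
    simp [Ty, Tyi, Ey, Dz, Matrix.mul_apply, Fintype.sum_prod_type, Fin.sum_univ_two,
      Matrix.kroneckerMap_apply, Matrix.diagonal, Prod.ext_iff, Complex.ofReal_cos,
      Complex.ofReal_sin, Complex.cos, Complex.sin] <;> ring_nf <;>
    simp [Complex.I_sq] <;> ring_nf

lemma commute_smul_of_comm (c d : ℂ) (P Q : M4) (h : P * Q = Q * P) :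
    Commute (c • P) (d • Q) := by
  unfold Commute SemiconjBy
  rw [smul_mul_assoc, mul_smul_comm, smul_mul_assoc, mul_smul_comm, h, smul_comm]

lemma hXY : (PX ⊗ₖ PX) * (PY ⊗ₖ PY) = (PY ⊗ₖ PY) * (PX ⊗ₖ PX) := by
  ext ⟨i, k⟩ ⟨j, l⟩
  fin_cases i <;> fin_cases k <;> fin_cases j <;> fin_cases l <;>
    simp [PX, PY, Matrix.mul_apply, Fintype.sum_prod_type, Fin.sum_univ_two,
      Matrix.kroneckerMap_apply] <;> ring

lemma hXZ : (PX ⊗ₖ PX) * (PZ ⊗ₖ PZ) = (PZ ⊗ₖ PZ) * (PX ⊗ₖ PX) := by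
  ext ⟨i, k⟩ ⟨j, l⟩
  fin_cases i <;> fin_cases k <;> fin_cases j <;> fin_cases l <;>
    simp [PX, PZ, Matrix.mul_apply, Fintype.sum_prod_type, Fin.sum_univ_two,
      Matrix.kroneckerMap_apply] <;> ring

lemma hYZ : (PY ⊗ₖ PY) * (PZ ⊗ₖ PZ) = (PZ ⊗ₖ PZ) * (PY ⊗ₖ PY) := by
  ext ⟨i, k⟩ ⟨j, l⟩
  fin_cases i <;> fin_cases k <;> fin_cases j <;> fin_cases l <;>
    simp [PY, PZ, Matrix.mul_apply, Fintype.sum_prod_type, Fin.sum_univ_two,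
      Matrix.kroneckerMap_apply] <;> ring

lemma KCcore_eq (ax ay az : ℝ) : KCcore ax ay az = Ex ax * Ey ay * Dz az := by
  unfold KCcore
  have harg : Complex.I • ((ax : ℂ) • (PX ⊗ₖ PX) + (ay : ℂ) • (PY ⊗ₖ PY)
        + (az : ℂ) • (PZ ⊗ₖ PZ)) =
      ((ax : ℂ) * Complex.I) • (PX ⊗ₖ PX) + ((ay : ℂ) * Complex.I) • (PY ⊗ₖ PY)
        + ((az : ℂ) * Complex.I) • (PZ ⊗ₖ PZ) := by
    module
  rw [harg]
  rw [Matrix.exp_add_of_commute _ _ (((commute_smul_of_comm _ _ _ _ hXZ).add_left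
    (commute_smul_of_comm _ _ _ _ hYZ)))]
  rw [Matrix.exp_add_of_commute _ _ (commute_smul_of_comm _ _ _ _ hXY)]
  rw [expXX, expYY, expZZ]

lemma exp_neg_mul_I_re (x : ℝ) : (Complex.exp (-(↑x * Complex.I))).re = Real.cos x := by
  rw [show -((x:ℂ) * Complex.I) = ((-x : ℝ) : ℂ) * Complex.I by push_cast; ring,
    Complex.exp_mul_I]
  simp [← Complex.ofReal_cos, ← Complex.ofReal_sin]

lemma exp_neg_mul_I_im (x : ℝ) : (Complex.exp (-(↑x * Complex.I))).im = -Real.sin x := by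
  rw [show -((x:ℂ) * Complex.I) = ((-x : ℝ) : ℂ) * Complex.I by push_cast; ring,
    Complex.exp_mul_I]
  simp [← Complex.ofReal_cos, ← Complex.ofReal_sin]


/-- when all three KC coefficients have nonzero `sin(2α)`, the induced map
on A is not unital, for every pure input state on B. -/
theorem stmt10 (ax ay az : ℝ) (hx : Real.sin (2 * ax) ≠ 0) (hy : Real.sin (2 * ay) ≠ 0)
    (hz : Real.sin (2 * az) ≠ 0) (a b : ℂ)
    (hab : ‖a‖ ^ 2 + ‖b‖ ^ 2 = 1) :
    ptraceB (KCcore ax ay az *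
        ((1 : M2) ⊗ₖ !![a * star a, a * star b; b * star a, b * star b]) *
        (KCcore ax ay az)ᴴ) ≠ (1 : M2) := by
  intro heq
  rw [KCcore_eq] at heq
  have h01 := congrFun (congrFun heq (0 : Fin 2)) (1 : Fin 2)
  have h00 := congrFun (congrFun heq (0 : Fin 2)) (0 : Fin 2)
  simp only [ptraceB, Matrix.of_apply, Matrix.one_apply, Matrix.mul_apply,
    Fintype.sum_prod_type, Fin.sum_univ_two, Matrix.conjTranspose_apply,
    Matrix.kroneckerMap_apply, Ex, Ey, Dz, Matrix.diagonal, Matrix.cons_val', Matrix.cons_val_zero,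
    Matrix.cons_val_one, Matrix.head_cons, Matrix.head_fin_const, Matrix.empty_val',
    Matrix.cons_val_fin_one] at h01 h00
  norm_num [Prod.ext_iff, Fin.ext_iff] at h01 h00
  simp only [Complex.ext_iff, Complex.exp_mul_I, Complex.cos_neg, Complex.sin_neg,
    ← Complex.ofReal_cos, ← Complex.ofReal_sin, Complex.add_re, Complex.add_im, Complex.mul_re,
    Complex.mul_im, Complex.ofReal_re, Complex.ofReal_im, Complex.I_re, Complex.I_im,
    Complex.neg_re, Complex.neg_im, Complex.star_def, Complex.conj_re, Complex.conj_im,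
    Complex.zero_re, Complex.zero_im, Complex.one_re, Complex.one_im,
    exp_neg_mul_I_re, exp_neg_mul_I_im] at h01 h00
  rw [Real.sin_two_mul] at hx hy hz
  set ca := Real.cos ax; set sa := Real.sin ax
  set cb := Real.cos ay; set sb := Real.sin ay
  set cz := Real.cos az; set sz := Real.sin az
  have e1 : sz ^ 2 + cz ^ 2 = 1 := Real.sin_sq_add_cos_sq az
  have e2 : sa ^ 2 + ca ^ 2 = 1 := Real.sin_sq_add_cos_sq ax
  have e3 : sb ^ 2 + cb ^ 2 = 1 := Real.sin_sq_add_cos_sq ay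
  have hab' : (a.re ^ 2 + a.im ^ 2) + (b.re ^ 2 + b.im ^ 2) = 1 := by
    have := hab
    rw [Complex.sq_norm, Complex.sq_norm, Complex.normSq_apply, Complex.normSq_apply] at this
    linarith [this]
  ring_nf at h01 h00
  have hR0 : (sz * cz) * (sb * cb) * (a.re * b.re + a.im * b.im) = 0 := by
    linear_combination (1/8) * h01.1 -
      (cb * sb * cz * sz * (a.re * b.re + a.im * b.im)) * e2
  have hS0 : (sz * cz) * (sa * ca) * (a.im * b.re - a.re * b.im) = 0 := by
    linear_combination (1/8) * h01.2 -
      (ca * sa * cz * sz * (a.im * b.re - a.re * b.im)) * e3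
  have key : (ca * cb * sa * sb) * ((a.re^2 + a.im^2) - (b.re^2 + b.im^2)) = 0 := by
    linear_combination (1/4) * h00.1
      - (1/4) * (((a.re^2 + a.im^2 + b.re^2 + b.im^2) * (ca^2 + sa^2) * (cb^2 + sb^2)
          + 4 * (ca * cb * sa * sb) * ((a.re^2 + a.im^2) - (b.re^2 + b.im^2)))) * e1
      - (1/4) * ((a.re^2 + a.im^2 + b.re^2 + b.im^2) * (cb^2 + sb^2)) * e2
      - (1/4) * (a.re^2 + a.im^2 + b.re^2 + b.im^2) * e3
      - (1/4) * hab'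
  have hz' : sz * cz ≠ 0 := fun h => hz (by rw [mul_assoc, h, mul_zero])
  have ha' : sa * ca ≠ 0 := fun h => hx (by rw [mul_assoc, h, mul_zero])
  have hb' : sb * cb ≠ 0 := fun h => hy (by rw [mul_assoc, h, mul_zero])
  have hR : a.re * b.re + a.im * b.im = 0 := by
    rcases mul_eq_zero.mp hR0 with h | h
    · rcases mul_eq_zero.mp h with h' | h'
      · exact absurd h' hz'
      · exact absurd h' hb'
    · exact h
  have hS : a.im * b.re - a.re * b.im = 0 := by
    rcases mul_eq_zero.mp hS0 with h | h
    · rcases mul_eq_zero.mp h with h' | h'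
      · exact absurd h' hz'
      · exact absurd h' ha'
    · exact h
  have hnn : (a.re^2 + a.im^2) * (b.re^2 + b.im^2) = 0 := by
    linear_combination (a.re * b.re + a.im * b.im) * hR + (a.im * b.re - a.re * b.im) * hS
  have hT : ca * cb * sa * sb ≠ 0 := by
    have := mul_ne_zero ha' hb'
    intro h; apply this; linear_combination h
  have hdiff : (a.re^2 + a.im^2) - (b.re^2 + b.im^2) = 0 := by
    rcases mul_eq_zero.mp key with h | h
    · exact absurd h hT
    · exact h
  have h1 : a.re^2 + a.im^2 = 1/2 := by linarith
  have h2 : b.re^2 + b.im^2 = 1/2 := by linarith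
  rw [h1, h2] at hnn
  norm_num at hnn


end
end

section
/- Suppose αx, αy ∈ ℝ and let U₀ = exp(i(αx·X⊗X + αy·Y⊗Y)) (i.e., the KC form with αz = 0). Let φ₊ be the rank-one projector onto (1/√2)(|0⟩ + |1⟩), i.e., φ₊ = !![1/2, 1/2; 1/2, 1/2]. Then Tr_B[U₀ · (I₂ ⊗ φ₊) · U₀†] = I₂. -/
open Matrix Kronecker Complex

noncomputable section

-- magic/Bell basis (columns), unnormalized
def Pm : M4 := Matrix.of fun p q =>
  (!![1,1,0,0; 0,0,1,1; 0,0,1,-1; 1,-1,0,0] : Matrix (Fin 4) (Fin 4) ℂ)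
    (finProdFinEquiv p) (finProdFinEquiv q)

def Qm : M4 := (2:ℂ)⁻¹ • Pmᵀ

def dvec (ax ay : ℝ) : Fin 2 × Fin 2 → ℂ := fun q =>
  Complex.I * (![((ax:ℂ) - ay), (ay - ax), (ax + ay), (-ax - ay)] (finProdFinEquiv q))

lemma hPQ : Pm * Qm = 1 := by
  ext ⟨i,j⟩ ⟨k,l⟩
  fin_cases i <;> fin_cases j <;> fin_cases k <;> fin_cases l <;>
    simp [Pm, Qm, Matrix.mul_apply, Fintype.sum_prod_type, Fin.sum_univ_succ,
      finProdFinEquiv, Matrix.one_apply, Prod.ext_iff] <;> norm_num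

lemma hdiag (ax ay : ℝ) :
    Complex.I • ((ax : ℂ) • (PX ⊗ₖ PX) + (ay : ℂ) • (PY ⊗ₖ PY) + (0:ℝ) • (PZ ⊗ₖ PZ))
      = Pm * Matrix.diagonal (dvec ax ay) * Qm := by
  ext ⟨i,j⟩ ⟨k,l⟩
  fin_cases i <;> fin_cases j <;> fin_cases k <;> fin_cases l <;>
    simp [Pm, Qm, dvec, PX, PY, PZ, Matrix.mul_apply, Fintype.sum_prod_type,
      Fin.sum_univ_succ, finProdFinEquiv, Matrix.diagonal, kroneckerMap_apply] <;> ring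

lemma KCcore_eq_s11 (ax ay : ℝ) :
    KCcore ax ay 0 = Pm * Matrix.diagonal (fun q => Complex.exp (dvec ax ay q)) * Qm := by
  have hu : IsUnit Pm := ⟨⟨Pm, Qm, hPQ, mul_eq_one_comm.mp hPQ⟩, rfl⟩
  have hinv : Pm⁻¹ = Qm := Matrix.inv_eq_right_inv hPQ
  have : KCcore ax ay 0 = NormedSpace.exp (Pm * Matrix.diagonal (dvec ax ay) * Pm⁻¹) := by
    rw [hinv, KCcore, ← hdiag]; norm_num
  rw [this, Matrix.exp_conj Pm _ hu, Matrix.exp_diagonal, hinv]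
  congr 1
  ext q
  simp [Pi.coe_exp, Complex.exp_eq_exp_ℂ]

def Umat (ax ay : ℝ) : M4 := Matrix.of fun p q =>
  (!![(cexp (Complex.I*((ax:ℂ)-ay)) + cexp (-(Complex.I*((ax:ℂ)-ay))))/2, 0, 0,
        (cexp (Complex.I*((ax:ℂ)-ay)) - cexp (-(Complex.I*((ax:ℂ)-ay))))/2;
      0, (cexp (Complex.I*((ax:ℂ)+ay)) + cexp (-(Complex.I*((ax:ℂ)+ay))))/2,
        (cexp (Complex.I*((ax:ℂ)+ay)) - cexp (-(Complex.I*((ax:ℂ)+ay))))/2, 0;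
      0, (cexp (Complex.I*((ax:ℂ)+ay)) - cexp (-(Complex.I*((ax:ℂ)+ay))))/2,
        (cexp (Complex.I*((ax:ℂ)+ay)) + cexp (-(Complex.I*((ax:ℂ)+ay))))/2, 0;
      (cexp (Complex.I*((ax:ℂ)-ay)) - cexp (-(Complex.I*((ax:ℂ)-ay))))/2, 0, 0,
        (cexp (Complex.I*((ax:ℂ)-ay)) + cexp (-(Complex.I*((ax:ℂ)-ay))))/2] : Matrix (Fin 4) (Fin 4) ℂ)
    (finProdFinEquiv p) (finProdFinEquiv q)

lemma Umat_eq (ax ay : ℝ) :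
    Pm * Matrix.diagonal (fun q => Complex.exp (dvec ax ay q)) * Qm = Umat ax ay := by
  ext ⟨i,j⟩ ⟨k,l⟩
  fin_cases i <;> fin_cases j <;> fin_cases k <;> fin_cases l <;>
    simp [Pm, Qm, dvec, Umat, Matrix.mul_apply, Fintype.sum_prod_type, Fin.sum_univ_two,
      finProdFinEquiv, Matrix.diagonal] <;>
    simp only [show Complex.I*((ay:ℂ)-ax) = -(Complex.I*((ax:ℂ)-ay)) by ring,
      show Complex.I*((-ax:ℂ)-ay) = -(Complex.I*((ax:ℂ)+ay)) by ring] <;> ring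


set_option maxHeartbeats 2000000 in
/-- with `αz = 0` and input `φ₊ = |+⟩⟨+|` on B, the induced map on A is unital. -/
theorem stmt11 (ax ay : ℝ) :
    ptraceB (KCcore ax ay 0 *
        ((1 : M2) ⊗ₖ !![1/2, 1/2; 1/2, 1/2]) *
        (KCcore ax ay 0)ᴴ) = (1 : M2) := by
  rw [KCcore_eq_s11, Umat_eq]
  ext i j
  fin_cases i <;> fin_cases j <;>
    simp [ptraceB, Umat, Matrix.mul_apply, Fintype.sum_prod_type, Fin.sum_univ_two,
      finProdFinEquiv, Matrix.conjTranspose_apply, kroneckerMap_apply,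
      Matrix.one_apply, ← Complex.exp_conj, Complex.conj_I,
      Complex.conj_ofReal, map_ofNat, Complex.exp_neg] <;>
    field_simp [Complex.exp_ne_zero] <;> ring_nf <;>
    simp only [sq, ← Complex.exp_neg, ← Complex.exp_add, ← Complex.exp_zero] <;>
    congr 1 <;> ring

end
end

section
/- Let θ₁, θ₂, φ₁, φ₂ ∈ ℝ, and let W = C_p(θ₁)·(R_y(φ₁) ⊗ R_y(φ₂))·C_p(θ₂), where C_p(θ) = diag(1,1,1,e^{iθ}) is the controlled-phase gate and R_y(φ) = exp(−i·(φ/2)·Y). Then Tr_B[W · (I₂ ⊗ E₀₀) · W†] = I₂, where E₀₀ = !![1,0;0,0]; i.e., the channel ρ ↦ Tr_B[W (ρ ⊗ E₀₀) W†] is unital. -/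
open Matrix Kronecker Complex

noncomputable section

def rotC : ℂ →+* M2 where
  toFun z := !![(z.re : ℂ), -(z.im : ℂ); (z.im : ℂ), (z.re : ℂ)]
  map_one' := by ext i j; fin_cases i <;> fin_cases j <;> simp
  map_mul' z w := by
    ext i j; fin_cases i <;> fin_cases j <;>
      simp [Matrix.mul_apply, Fin.sum_univ_two] <;> push_cast <;> ring
  map_zero' := by ext i j; fin_cases i <;> fin_cases j <;> simp
  map_add' z w := by
    ext i j; fin_cases i <;> fin_cases j <;> simp <;> push_cast <;> ring

lemma rotC_cont : Continuous rotC := by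
  apply continuous_matrix
  intro i j
  fin_cases i <;> fin_cases j <;> simp [rotC] <;> fun_prop

section
attribute [local instance] Matrix.linftyOpNormedRing Matrix.linftyOpNormedAlgebra

lemma exp_PY (φ : ℝ) :
    NormedSpace.exp ((-(Complex.I * ((φ : ℂ) / 2))) • PY) =
      !![(Real.cos (φ/2) : ℂ), -(Real.sin (φ/2) : ℂ);
         (Real.sin (φ/2) : ℂ), (Real.cos (φ/2) : ℂ)] := by
  have h : (-(Complex.I * ((φ : ℂ) / 2))) • PY = rotC (Complex.I * (φ/2 : ℝ)) := by
    ext i j; fin_cases i <;> fin_cases j <;>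
      simp [PY, rotC] <;> ring_nf <;> simp [Complex.I_sq] <;> ring
  rw [h, show NormedSpace.exp (rotC (Complex.I * (φ/2 : ℝ))) = rotC (NormedSpace.exp (Complex.I * (φ/2 : ℝ))) from
    (NormedSpace.map_exp rotC rotC_cont _).symm, ← Complex.exp_eq_exp_ℂ, mul_comm]
  have e2 : ((φ:ℂ)/2) = ((φ/2:ℝ):ℂ) := by push_cast; ring
  ext i j; fin_cases i <;> fin_cases j <;>
    simp only [rotC, RingHom.coe_mk, MonoidHom.coe_mk, OneHom.coe_mk, e2,
      Complex.exp_ofReal_mul_I_re, Complex.exp_ofReal_mul_I_im] <;>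
    simp

end

/-- for `W = C_p(θ₁)(R_y(φ₁) ⊗ R_y(φ₂))C_p(θ₂)` and input `|0⟩⟨0|` on B,
the channel `ρ ↦ Tr_B[W (ρ ⊗ |0⟩⟨0|) W†]` is unital. -/
theorem stmt12 (θ₁ θ₂ φ₁ φ₂ : ℝ) :
    ptraceB (Cp θ₁ * (NormedSpace.exp ((-(Complex.I * ((φ₁ : ℂ) / 2))) • PY) ⊗ₖ
          NormedSpace.exp ((-(Complex.I * ((φ₂ : ℂ) / 2))) • PY)) * Cp θ₂ *
        ((1 : M2) ⊗ₖ E00) *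
        (Cp θ₁ * (NormedSpace.exp ((-(Complex.I * ((φ₁ : ℂ) / 2))) • PY) ⊗ₖ
          NormedSpace.exp ((-(Complex.I * ((φ₂ : ℂ) / 2))) • PY)) * Cp θ₂)ᴴ) = (1 : M2) := by
  have hc1 : ((Real.sin (φ₁/2)):ℂ)^2 + ((Real.cos (φ₁/2)):ℂ)^2 = 1 := by
    exact_mod_cast congrArg (Complex.ofReal) (Real.sin_sq_add_cos_sq (φ₁/2))
  have hc2 : ((Real.sin (φ₂/2)):ℂ)^2 + ((Real.cos (φ₂/2)):ℂ)^2 = 1 := by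
    exact_mod_cast congrArg (Complex.ofReal) (Real.sin_sq_add_cos_sq (φ₂/2))
  have hz : Complex.exp (Complex.I * θ₁) * (starRingEnd ℂ) (Complex.exp (Complex.I * θ₁)) = 1 := by
    rw [← Complex.exp_conj, ← Complex.exp_add]
    simp [Complex.conj_ofReal]
  rw [exp_PY, exp_PY]
  ext i j
  fin_cases i <;> fin_cases j <;>
    simp only [ptraceB, Cp, E00, Matrix.mul_apply, Fintype.sum_prod_type, Fin.sum_univ_two,
      Matrix.conjTranspose_apply, Matrix.diagonal_apply, Prod.ext_iff, Matrix.of_apply,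
      kroneckerMap_apply, Matrix.one_apply, Matrix.cons_val', Matrix.cons_val_zero,
      Matrix.cons_val_one, Matrix.head_cons, Matrix.head_fin_const, Matrix.empty_val',
      Matrix.cons_val_fin_one, Complex.conj_ofReal, _root_.map_mul, _root_.map_one, map_neg, map_zero,
      star_one, star_zero] <;>
    simp [Complex.conj_ofReal, -Complex.ofReal_cos, -Complex.ofReal_sin] <;>
    (first
      | linear_combination
          (-( ((Real.cos (φ₁/2)):ℂ)^2 + ((Real.sin (φ₁/2)):ℂ)^2 ) * ((Real.sin (φ₂/2)):ℂ)^2) * hz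
      | linear_combination
          (-( ((Real.cos (φ₂/2)):ℂ)^2 + ((Real.sin (φ₂/2)):ℂ)^2 )) * hc1 - hc2 -
          (((Real.cos (φ₁/2)):ℂ)^2 + ((Real.sin (φ₁/2)):ℂ)^2) * ((Real.sin (φ₂/2)):ℂ)^2 * hz
      | linear_combination (((Real.cos (φ₂/2)):ℂ)^2 + ((Real.sin (φ₂/2)):ℂ)^2) * hc1 +
          (((Real.sin (φ₁/2)):ℂ)^2 + ((Real.cos (φ₁/2)):ℂ)^2) * ((Real.sin (φ₂/2)):ℂ)^2 * hz + hc2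
      | linear_combination (((Real.cos (φ₂/2)):ℂ)^2 + ((Real.sin (φ₂/2)):ℂ)^2) * hc1 + hc2
      | ring)

end
end
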